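/- Let $\ell$ be an odd integer, $\chi$ a Dirichlet character of modulus $N$, and let $r, s$ be coprime positive integers with $N \mid rs$ and $4 \mid s$. Write $\chi = \chi_r \chi_s$ with $\chi_r$ of modulus $(N,r)$ and $\chi_s$ of modulus $(N,s)$, and choose integers $\bar r, \bar s$ with $\bar r r + \bar s s = 1$. Then for all integers $m, n$: $K_\ell(m,n;rs;\chi) = S(m\bar s, n\bar s; r; \chi_r)\, K_{\ell + r - 1}(m\bar r, n\bar r; s; \chi_s)$. -/

import Mathlib

open scoped BigOperators

/-- `e(x) = exp(2πix)`. -/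
noncomputable def eFun (x : ℝ) : ℂ := Complex.exp (2 * Real.pi * Complex.I * x)

/-- `ε_d`: `1` if `d ≡ 1 (mod 4)`, `i` if `d ≡ 3 (mod 4)`. -/
noncomputable def epsFactor (d : ℤ) : ℂ := if d % 4 = 1 then 1 else Complex.I

/-- The Kronecker symbol `(a | 2)`. -/
def kron2 (a : ℤ) : ℤ :=
  if a % 2 = 0 then 0 else if a % 8 = 1 ∨ a % 8 = 7 then 1 else -1

/-- The extended Kronecker symbol `(a | n)`. -/
def kroneckerSym (a n : ℤ) : ℤ :=
  if n = 0 then (if a = 1 ∨ a = -1 then 1 else 0)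
  else
    (if n < 0 ∧ a < 0 then -1 else 1) *
      kron2 a ^ (n.natAbs.factorization 2) *
      jacobiSym a (n.natAbs / 2 ^ (n.natAbs.factorization 2))

/-- The half-integral weight Kloosterman sum
`K_ℓ(m,n;c;χ) = ∑_{ad ≡ 1 (c)} ε_d^ℓ conj(χ(d)) (c|d) e((ma+nd)/c)`. -/
noncomputable def Ksum (ℓ m n : ℤ) (c : ℕ) [NeZero c] {N : ℕ}
    (χ : DirichletCharacter ℂ N) : ℂ :=
  ∑ d : (ZMod c)ˣ,
    epsFactor ((d : ZMod c).val : ℤ) ^ ℓ *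
      (starRingEnd ℂ) (χ (((d : ZMod c).val : ℕ) : ZMod N)) *
      (kroneckerSym (c : ℤ) ((d : ZMod c).val : ℤ) : ℂ) *
      eFun (((m * (((d⁻¹ : (ZMod c)ˣ) : ZMod c).val : ℤ) +
              n * ((d : ZMod c).val : ℤ) : ℤ) : ℝ) / (c : ℝ))

/-- The Dirichlet-twisted Salié sum
`S(m,n;c;χ) = ∑_{ad ≡ 1 (c)} conj(χ(d)) (d|c) e((ma+nd)/c)`. -/
noncomputable def Ssum (m n : ℤ) (c : ℕ) [NeZero c] {N : ℕ}
    (χ : DirichletCharacter ℂ N) : ℂ :=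
  ∑ d : (ZMod c)ˣ,
    (starRingEnd ℂ) (χ (((d : ZMod c).val : ℕ) : ZMod N)) *
      (kroneckerSym ((d : ZMod c).val : ℤ) (c : ℤ) : ℂ) *
      eFun (((m * (((d⁻¹ : (ZMod c)ˣ) : ZMod c).val : ℤ) +
              n * ((d : ZMod c).val : ℤ) : ℤ) : ℝ) / (c : ℝ))

/-- Twisted multiplicativity relating half-integral Kloosterman sums and Salié sums:
for `r, s` coprime with `N ∣ rs` and `4 ∣ s`, and `χ = χ_r χ_s`, `r̄r + s̄s = 1`,
`K_ℓ(m,n;rs;χ) = S(ms̄, ns̄; r; χ_r) K_{ℓ+r-1}(mr̄, nr̄; s; χ_s)`. -/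
lemma kroneckerSym_odd_nat (a : ℤ) {b : ℕ} (hb : b % 2 = 1) :
    kroneckerSym a (b : ℤ) = jacobiSym a b := by
  have hb0 : (b:ℤ) ≠ 0 := by omega
  have hf : b.factorization 2 = 0 :=
    Nat.factorization_eq_zero_of_not_dvd (by omega)
  simp [kroneckerSym, hb0, Int.natAbs_natCast, hf, not_lt.mpr (Int.ofNat_nonneg b)]
  exact fun h => absurd h (by omega)

lemma neg_one_pow_congr' {M : Type*} [Monoid M] [HasDistribNeg M] {m n : ℕ}
    (h : m % 2 = n % 2) : ((-1 : M)) ^ m = (-1) ^ n := by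
  rcases Nat.even_or_odd m with hm | hm
  · have hn : Even n := Nat.even_iff.mpr (by rw [← h]; exact Nat.even_iff.mp hm)
    rw [hm.neg_one_pow, hn.neg_one_pow]
  · have hn : Odd n := Nat.odd_iff.mpr (by rw [← h]; exact Nat.odd_iff.mp hm)
    rw [hm.neg_one_pow, hn.neg_one_pow]

lemma eps_pow (a r : ℕ) (ha : a % 4 = 1 ∨ a % 4 = 3) (hr : r % 2 = 1) :
    epsFactor (a:ℤ) ^ ((r:ℤ) - 1) = (((-1 : ℤ) ^ (r / 2 * (a / 2)) : ℤ) : ℂ) := by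
  have h1 : (r:ℤ) - 1 = ((r - 1 : ℕ) : ℤ) := by omega
  rw [h1, zpow_natCast]
  push_cast
  rcases ha with h | h
  · have he : epsFactor (a:ℤ) = 1 := by
      have : (a:ℤ) % 4 = 1 := by omega
      simp [epsFactor, this]
    have hev : Even (r / 2 * (a / 2)) :=
      Nat.even_mul.mpr (Or.inr (Nat.even_iff.mpr (by omega)))
    rw [he, one_pow, hev.neg_one_pow]
  · have he : epsFactor (a:ℤ) = Complex.I := by
      have : (a:ℤ) % 4 ≠ 1 := by omega
      simp [epsFactor, this]
    rw [he]
    have h2 : r - 1 = 2 * ((r-1)/2) := by omega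
    rw [h2, pow_mul, Complex.I_sq]
    exact neg_one_pow_congr' (by
      have : a / 2 % 2 = 1 := by omega
      have : (r/2 * (a/2)) % 2 = (r/2) % 2 := by
        rw [Nat.mul_mod, this, mul_one, Nat.mod_mod_of_dvd _ dvd_rfl]
      omega)

lemma jacobi_per {s : ℕ} (hs0 : s ≠ 0) (h4 : 4 ∣ s) {a b : ℕ} (ha : a % 2 = 1) (hb : b % 2 = 1)
    (hab : a % s = b % s) : jacobiSym (s : ℤ) a = jacobiSym (s : ℤ) b := by
  set k := s.factorization 2 with hk
  set t := ordCompl[2] s with ht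
  have hst : 2 ^ k * t = s := Nat.ordProj_mul_ordCompl_eq_self s 2
  have htodd : t % 2 = 1 :=
    Nat.odd_iff.mp (Nat.odd_iff.mpr (by
      have := Nat.not_dvd_ordCompl Nat.prime_two hs0
      omega))
  have hk2 : 2 ≤ k := by
    exact (Nat.Prime.pow_dvd_iff_le_factorization Nat.prime_two hs0).mp
      (by rwa [show (4:ℕ) = 2^2 by norm_num] at h4)
  have hts : t ∣ s := Nat.ordCompl_dvd s 2
  have hab4 : a % 4 = b % 4 := Nat.ModEq.of_dvd h4 hab
  have habt : a % t = b % t := Nat.ModEq.of_dvd hts hab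
  have hsplit : ∀ x : ℕ, jacobiSym (s:ℤ) x = jacobiSym (2:ℤ) x ^ k * jacobiSym (t:ℤ) x := by
    intro x
    rw [← hst]
    push_cast
    rw [jacobiSym.mul_left, jacobiSym.pow_left]
  rw [hsplit a, hsplit b]
  have h2part : jacobiSym (2:ℤ) a ^ k = jacobiSym (2:ℤ) b ^ k := by
    rw [jacobiSym.at_two (Nat.odd_iff.mpr ha), jacobiSym.at_two (Nat.odd_iff.mpr hb)]
    rcases Nat.even_or_odd k with hke | hko
    · obtain ⟨j, hj⟩ := hke
      have sqa : (ZMod.χ₈ (a : ZMod 8)) ^ 2 = 1 := by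
        rw [ZMod.χ₈_nat_eq_if_mod_eight]
        have : ¬ (a % 2 = 0) := by omega
        split_ifs <;> simp_all
      have sqb : (ZMod.χ₈ (b : ZMod 8)) ^ 2 = 1 := by
        rw [ZMod.χ₈_nat_eq_if_mod_eight]
        have : ¬ (b % 2 = 0) := by omega
        split_ifs <;> simp_all
      rw [show k = j + j by omega, ← two_mul, pow_mul, pow_mul, sqa, sqb]
    · have h8 : (8:ℕ) ∣ s := by
        rw [show (8:ℕ) = 2^3 by norm_num]
        exact (Nat.Prime.pow_dvd_iff_le_factorization Nat.prime_two hs0).mpr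
          (by have := Nat.odd_iff.mp hko; omega)
      have hab8 : a % 8 = b % 8 := Nat.ModEq.of_dvd h8 hab
      have : ZMod.χ₈ (a : ZMod 8) = ZMod.χ₈ (b : ZMod 8) := by
        rw [ZMod.χ₈_nat_eq_if_mod_eight, ZMod.χ₈_nat_eq_if_mod_eight, hab8]
        split_ifs <;> omega
      rw [this]
  rw [h2part]
  congr 1
  rw [jacobiSym.quadratic_reciprocity (Nat.odd_iff.mpr htodd) (Nat.odd_iff.mpr ha),
      jacobiSym.quadratic_reciprocity (Nat.odd_iff.mpr htodd) (Nat.odd_iff.mpr hb)]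
  have hmod : jacobiSym (a:ℤ) t = jacobiSym (b:ℤ) t :=
    jacobiSym.mod_left' (by rw [← Int.natCast_mod, ← Int.natCast_mod, habt])
  rw [hmod]
  congr 1
  exact neg_one_pow_congr' (by
    have h2 : a / 2 % 2 = b / 2 % 2 := by omega
    rw [Nat.mul_mod, h2, ← Nat.mul_mod])

lemma core_sym (ℓ : ℤ) (r s a : ℕ) (hs0 : s ≠ 0) (hrodd : r % 2 = 1)
    (h4 : 4 ∣ s) (haodd : a % 2 = 1) :
    epsFactor (a:ℤ) ^ ℓ * (kroneckerSym ((r*s : ℕ) : ℤ) (a:ℤ) : ℂ) =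
      (kroneckerSym ((a % r : ℕ):ℤ) ((r:ℕ):ℤ) : ℂ) *
        (epsFactor ((a % s : ℕ):ℤ) ^ (ℓ + (r:ℤ) - 1) *
          (kroneckerSym ((s:ℕ):ℤ) ((a % s : ℕ):ℤ) : ℂ)) := by
  have haodd4 : a % 4 = 1 ∨ a % 4 = 3 := by omega
  have h2s : 2 ∣ s := dvd_trans (by norm_num) h4
  obtain ⟨u, hu⟩ := h2s
  have hdm := Nat.div_add_mod a s
  have haux : 2 * (u * (a / s)) + a % s = a := by
    rw [show 2 * (u * (a / s)) = s * (a / s) by rw [hu]; ring]; exact hdm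
  have hasodd : (a % s) % 2 = 1 := by omega
  have h4m : (a % s) % 4 = a % 4 := Nat.mod_mod_of_dvd a h4
  have heps : epsFactor (a:ℤ) = epsFactor ((a % s : ℕ):ℤ) := by
    unfold epsFactor
    have h1 : ((a % s : ℕ):ℤ) % 4 = (a:ℤ) % 4 := by omega
    rw [h1]
  have hepsne : epsFactor (a:ℤ) ≠ 0 := by
    unfold epsFactor; split_ifs
    · exact one_ne_zero
    · exact Complex.I_ne_zero
  rw [kroneckerSym_odd_nat _ haodd, kroneckerSym_odd_nat _ hrodd, kroneckerSym_odd_nat _ hasodd]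
  rw [show ((r*s : ℕ) : ℤ) = (r:ℤ) * (s:ℤ) by push_cast; ring, jacobiSym.mul_left]
  rw [jacobiSym.quadratic_reciprocity (Nat.odd_iff.mpr hrodd) (Nat.odd_iff.mpr haodd)]
  rw [jacobiSym.mod_left' (show (a:ℤ) % (r:ℕ) = ((a % r : ℕ):ℤ) % (r:ℕ) by
    rw [Int.natCast_mod]; rw [Int.emod_emod_of_dvd _ dvd_rfl])]
  rw [jacobi_per hs0 h4 haodd hasodd (Nat.mod_mod_of_dvd a dvd_rfl).symm]
  have hz : epsFactor (a:ℤ) ^ ℓ * (((-1:ℤ) ^ (r/2 * (a/2)) : ℤ) : ℂ) =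
      epsFactor ((a % s : ℕ):ℤ) ^ (ℓ + (r:ℤ) - 1) := by
    rw [← eps_pow a r haodd4 hrodd, ← heps, ← zpow_add₀ hepsne]
    congr 1
    ring
  push_cast [Int.natCast_mod] at hz ⊢
  linear_combination ((jacobiSym ((a:ℤ) % (r:ℤ)) r : ℂ) * (jacobiSym (s:ℤ) (a % s) : ℂ)) * hz

lemma eFun_add (x y : ℝ) : eFun (x + y) = eFun x * eFun y := by
  simp only [eFun, ← Complex.exp_add]
  push_cast
  ring_nf

lemma eFun_int (k : ℤ) : eFun (k : ℝ) = 1 := by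
  simp only [eFun]
  rw [show (2 * Real.pi * Complex.I * ((k:ℝ):ℂ)) = (k : ℂ) * (2 * Real.pi * Complex.I) by
    push_cast; ring]
  exact Complex.exp_int_mul_two_pi_mul_I k

lemma eFun_congr {c : ℕ} (hc : c ≠ 0) {u v : ℤ} (h : (c:ℤ) ∣ (u - v)) :
    eFun ((u : ℝ) / c) = eFun ((v : ℝ) / c) := by
  obtain ⟨k, hk⟩ := h
  have hcr : (c : ℝ) ≠ 0 := Nat.cast_ne_zero.mpr hc
  have h2 : (u : ℝ) / c = (k : ℝ) + (v : ℝ) / c := by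
    field_simp
    have : (u : ℝ) = (c : ℝ) * k + v := by
      exact_mod_cast congrArg (Int.cast : ℤ → ℝ) (by linarith [hk] : u = c * k + v)
    linarith
  rw [h2, eFun_add, eFun_int, one_mul]

lemma core_efun (m n rb sb : ℤ) (r s a b : ℕ) (hr0 : r ≠ 0) (hs0 : s ≠ 0)
    (hbez : rb * r + sb * s = 1) :
    eFun (((m * (b:ℤ) + n * (a:ℤ) : ℤ) : ℝ) / ((r*s : ℕ) : ℝ)) =
      eFun (((m * sb * ((b % r : ℕ):ℤ) + n * sb * ((a % r : ℕ):ℤ) : ℤ) : ℝ) / (r : ℝ)) *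
      eFun (((m * rb * ((b % s : ℕ):ℤ) + n * rb * ((a % s : ℕ):ℤ) : ℤ) : ℝ) / (s : ℝ)) := by
  have hrr : (r : ℝ) ≠ 0 := Nat.cast_ne_zero.mpr hr0
  have hsr : (s : ℝ) ≠ 0 := Nat.cast_ne_zero.mpr hs0
  set X : ℤ := m * sb * ((b % r : ℕ):ℤ) + n * sb * ((a % r : ℕ):ℤ) with hX
  set Y : ℤ := m * rb * ((b % s : ℕ):ℤ) + n * rb * ((a % s : ℕ):ℤ) with hY
  rw [← eFun_add]
  have hco : ((X:ℝ)) / r + ((Y:ℝ)) / s = ((X * s + Y * r : ℤ) : ℝ) / ((r*s : ℕ) : ℝ) := by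
    push_cast
    field_simp
  rw [hco]
  apply eFun_congr (mul_ne_zero hr0 hs0)
  refine ⟨(m * sb * ((b:ℤ)/(r:ℤ)) + n * sb * ((a:ℤ)/(r:ℤ))) +
          (m * rb * ((b:ℤ)/(s:ℤ)) + n * rb * ((a:ℤ)/(s:ℤ))), ?_⟩
  have hrs : ((r * s : ℕ) : ℤ) = (r:ℤ) * s := by push_cast; ring
  rw [hX, hY, hrs]
  push_cast [Int.natCast_mod]
  have k1 := Int.mul_ediv_add_emod (b:ℤ) (r:ℤ)
  have k2 := Int.mul_ediv_add_emod (a:ℤ) (r:ℤ)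
  have k3 := Int.mul_ediv_add_emod (b:ℤ) (s:ℤ)
  have k4 := Int.mul_ediv_add_emod (a:ℤ) (s:ℤ)
  linear_combination (-(m * (b:ℤ) + n * (a:ℤ))) * hbez + (-((s:ℤ) * m * sb)) * k1 +
    (-((s:ℤ) * n * sb)) * k2 + (-((r:ℤ) * m * rb)) * k3 + (-((r:ℤ) * n * rb)) * k4

theorem stmt_7 {N : ℕ} (χ : DirichletCharacter ℂ N) (ℓ : ℤ) (hℓ : Odd ℓ)
    (r s : ℕ) [NeZero r] [NeZero s] (hrs : Nat.Coprime r s)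
    (hN : N ∣ r * s) (h4 : 4 ∣ s)
    (χr : DirichletCharacter ℂ (N.gcd r)) (χs : DirichletCharacter ℂ (N.gcd s))
    (hfac : ∀ d : ℤ, χ (d : ZMod N) = χr (d : ZMod (N.gcd r)) * χs (d : ZMod (N.gcd s)))
    (rb sb : ℤ) (hbez : rb * r + sb * s = 1) (m n : ℤ) :
    Ksum ℓ m n (r * s) χ =
      Ssum (m * sb) (n * sb) r χr * Ksum (ℓ + (r : ℤ) - 1) (m * rb) (n * rb) s χs := by
  classical
  have hr0 : r ≠ 0 := NeZero.ne r
  have hs0 : s ≠ 0 := NeZero.ne s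
  haveI : NeZero (r * s) := ⟨mul_ne_zero hr0 hs0⟩
  have h2s : 2 ∣ s := dvd_trans (by norm_num) h4
  have hrodd : r % 2 = 1 := by
    rcases Nat.even_or_odd r with he | ho
    · exfalso
      have h2r : 2 ∣ r := he.two_dvd
      have hg : (2:ℕ) ∣ Nat.gcd r s := Nat.dvd_gcd h2r h2s
      rw [hrs] at hg
      omega
    · exact Nat.odd_iff.mp ho
  set f1 : ZMod (r*s) →* ZMod r := (ZMod.castHom (dvd_mul_right r s) (ZMod r)).toMonoidHom with hf1
  set f2 : ZMod (r*s) →* ZMod s := (ZMod.castHom (dvd_mul_left s r) (ZMod s)).toMonoidHom with hf2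
  set φ : (ZMod (r*s))ˣ → (ZMod r)ˣ × (ZMod s)ˣ :=
    fun d => (Units.map f1 d, Units.map f2 d) with hφdef
  have hval1 : ∀ u : (ZMod (r*s))ˣ,
      ((Units.map f1 u : (ZMod r)ˣ) : ZMod r).val = (u : ZMod (r*s)).val % r := by
    intro u
    rw [Units.coe_map]
    show ((ZMod.castHom (dvd_mul_right r s) (ZMod r)) (u : ZMod (r*s))).val = _
    rw [ZMod.castHom_apply, ← ZMod.natCast_val, ZMod.val_natCast]
  have hval2 : ∀ u : (ZMod (r*s))ˣ,
      ((Units.map f2 u : (ZMod s)ˣ) : ZMod s).val = (u : ZMod (r*s)).val % s := by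
    intro u
    rw [Units.coe_map]
    show ((ZMod.castHom (dvd_mul_left s r) (ZMod s)) (u : ZMod (r*s))).val = _
    rw [ZMod.castHom_apply, ← ZMod.natCast_val, ZMod.val_natCast]
  have hφbij : Function.Bijective φ := by
    rw [Fintype.bijective_iff_injective_and_card]
    constructor
    · intro d d' h
      have h1 : ((Units.map f1 d : (ZMod r)ˣ) : ZMod r).val
          = ((Units.map f1 d' : (ZMod r)ˣ) : ZMod r).val := by
        rw [show Units.map f1 d = Units.map f1 d' from congrArg Prod.fst h]
      have h2 : ((Units.map f2 d : (ZMod s)ˣ) : ZMod s).val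
          = ((Units.map f2 d' : (ZMod s)ˣ) : ZMod s).val := by
        rw [show Units.map f2 d = Units.map f2 d' from congrArg Prod.snd h]
      rw [hval1, hval1] at h1
      rw [hval2, hval2] at h2
      have hmod : (d : ZMod (r*s)).val ≡ (d' : ZMod (r*s)).val [MOD r * s] :=
        (Nat.modEq_and_modEq_iff_modEq_mul hrs).mp ⟨h1, h2⟩
      have hv : (d : ZMod (r*s)).val = (d' : ZMod (r*s)).val := by
        have l1 := ZMod.val_lt (d : ZMod (r*s))
        have l2 := ZMod.val_lt (d' : ZMod (r*s))
        unfold Nat.ModEq at hmod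
        rwa [Nat.mod_eq_of_lt l1, Nat.mod_eq_of_lt l2] at hmod
      have : (d : ZMod (r*s)) = (d' : ZMod (r*s)) := by
        have := congrArg (fun t : ℕ => (t : ZMod (r*s))) hv
        simpa only [ZMod.natCast_val, ZMod.cast_id] using this
      exact Units.ext this
    · simp only [Fintype.card_prod, ZMod.card_units_eq_totient, Nat.totient_mul hrs]
  have hgen : ∀ (F : (ZMod r)ˣ → ℂ) (G : (ZMod s)ˣ → ℂ),
      (∑ u : (ZMod r)ˣ, F u) * (∑ v : (ZMod s)ˣ, G v)
        = ∑ p : (ZMod r)ˣ × (ZMod s)ˣ, F p.1 * G p.2 := by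
    intro F G
    rw [Finset.sum_mul_sum, Fintype.sum_prod_type]
  rw [Ksum, Ssum, Ksum, hgen]
  refine Fintype.sum_bijective φ hφbij _ _ ?_
  intro d
  simp only [hφdef]
  set a : ℕ := (d : ZMod (r*s)).val with ha
  set b : ℕ := ((d⁻¹ : (ZMod (r*s))ˣ) : ZMod (r*s)).val with hb
  have e1 : ((Units.map f1 d : (ZMod r)ˣ) : ZMod r).val = a % r := hval1 d
  have e2 : ((Units.map f2 d : (ZMod s)ˣ) : ZMod s).val = a % s := hval2 d
  have e1i : (((Units.map f1 d)⁻¹ : (ZMod r)ˣ) : ZMod r).val = b % r := by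
    rw [← map_inv]
    exact hval1 d⁻¹
  have e2i : (((Units.map f2 d)⁻¹ : (ZMod s)ˣ) : ZMod s).val = b % s := by
    rw [← map_inv]
    exact hval2 d⁻¹
  have hco : Nat.Coprime a (r * s) := ZMod.val_coe_unit_coprime d
  have haodd : a % 2 = 1 := by
    rcases Nat.even_or_odd a with he | ho
    · exfalso
      have h2a : 2 ∣ a := he.two_dvd
      have h2rs : 2 ∣ r * s := Dvd.dvd.mul_left h2s r
      have hg : (2:ℕ) ∣ Nat.gcd a (r*s) := Nat.dvd_gcd h2a h2rs
      rw [hco] at hg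
      omega
    · exact Nat.odd_iff.mp ho
  have hχ : χ ((a : ℕ) : ZMod N)
      = χr ((a % r : ℕ) : ZMod (N.gcd r)) * χs ((a % s : ℕ) : ZMod (N.gcd s)) := by
    have hf := hfac (a : ℤ)
    push_cast at hf
    rw [hf]
    congr 1
    · congr 1
      exact (ZMod.natCast_eq_natCast_iff _ _ _).mpr
        (Nat.ModEq.of_dvd (Nat.gcd_dvd_right N r) (Nat.mod_modEq a r).symm)
    · congr 1
      exact (ZMod.natCast_eq_natCast_iff _ _ _).mpr
        (Nat.ModEq.of_dvd (Nat.gcd_dvd_right N s) (Nat.mod_modEq a s).symm)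
  show epsFactor (a : ℤ) ^ ℓ * (starRingEnd ℂ) (χ ((a:ℕ) : ZMod N)) *
      (kroneckerSym ((r*s : ℕ) : ℤ) (a:ℤ) : ℂ) *
      eFun (((m * (b:ℤ) + n * (a:ℤ) : ℤ) : ℝ) / ((r*s : ℕ) : ℝ)) = _
  rw [e1, e2, e1i, e2i, hχ, map_mul]
  have hsym := core_sym ℓ r s a hs0 hrodd h4 haodd
  have hef := core_efun m n rb sb r s a b hr0 hs0 hbez
  rw [hef]
  linear_combination ((starRingEnd ℂ) (χr ((a % r : ℕ) : ZMod (N.gcd r))) *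
    (starRingEnd ℂ) (χs ((a % s : ℕ) : ZMod (N.gcd s))) *
    eFun (((m * sb * ((b % r : ℕ):ℤ) + n * sb * ((a % r : ℕ):ℤ) : ℤ) : ℝ) / (r : ℝ)) *
    eFun (((m * rb * ((b % s : ℕ):ℤ) + n * rb * ((a % s : ℕ):ℤ) : ℤ) : ℝ) / (s : ℝ))) * hsym
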